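/- π = ∑_{i=1}^∞ (5i − 2) · ∏_{j=1}^{i−1} ( j·(2j−1) / (3·(3j+1)·(3j+2)) ). Concretely, the series begins 3 + 8·(1·1)/(3·4·5) + 13·(1·1)/(3·4·5)·(2·3)/(3·7·8) + ⋯ . -/

import Mathlib

open intervalIntegral MeasureTheory

lemma beta_nat : ∀ (b a : ℕ), ∫ x in (0:ℝ)..1, x ^ a * (1 - x) ^ b
    = (Nat.factorial a * Nat.factorial b : ℝ) / Nat.factorial (a + b + 1) := by
  intro b
  induction b with
  | zero =>
    intro a
    simp only [pow_zero, mul_one, integral_pow]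
    have hfa : (Nat.factorial a : ℝ) ≠ 0 := by positivity
    rw [Nat.add_zero, Nat.factorial_succ]
    push_cast
    field_simp
    simp
  | succ b ih =>
    intro a
    have hu : ∀ x ∈ Set.uIcc (0:ℝ) 1, HasDerivAt (fun x : ℝ => x ^ (a+1))
        (((a:ℝ)+1) * x ^ a) x := by
      intro x _
      simpa using (hasDerivAt_pow (a+1) x)
    have hv : ∀ x ∈ Set.uIcc (0:ℝ) 1, HasDerivAt (fun x : ℝ => (1 - x) ^ (b+1))
        (-(((b:ℝ)+1) * (1 - x) ^ b)) x := by
      intro x _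
      have h1 : HasDerivAt (fun x : ℝ => 1 - x) (-1) x := by
        simpa using (hasDerivAt_id x).const_sub 1
      have := (hasDerivAt_pow (b+1) (1 - x)).comp x h1
      simpa [mul_comm, mul_assoc, mul_left_comm, Function.comp_def] using this
    have hiu : IntervalIntegrable (fun x : ℝ => ((a:ℝ)+1) * x ^ a) MeasureTheory.volume 0 1 := by
      apply Continuous.intervalIntegrable; continuity
    have hiv : IntervalIntegrable (fun x : ℝ => -(((b:ℝ)+1) * (1 - x) ^ b))
        MeasureTheory.volume 0 1 := by
      apply Continuous.intervalIntegrable; continuity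
    have key := integral_mul_deriv_eq_deriv_mul hu hv hiu hiv
    simp only [one_pow, zero_pow, sub_zero, sub_self] at key
    -- key : ∫ x in 0..1, x^(a+1) * -((b+1)*(1-x)^b) = 0 - 0 - ∫ x in 0..1, ((a+1)*x^a) * (1-x)^(b+1)
    have e1 : ∫ x in (0:ℝ)..1, x ^ (a+1) * -(((b:ℝ)+1) * (1 - x) ^ b)
        = -(((b:ℝ)+1)) * ∫ x in (0:ℝ)..1, x ^ (a+1) * (1 - x) ^ b := by
      rw [← intervalIntegral.integral_const_mul]
      congr 1; ext x; ring
    have e2 : ∫ x in (0:ℝ)..1, (((a:ℝ)+1) * x ^ a) * (1 - x) ^ (b+1)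
        = ((a:ℝ)+1) * ∫ x in (0:ℝ)..1, x ^ a * (1 - x) ^ (b+1) := by
      rw [← intervalIntegral.integral_const_mul]
      congr 1; ext x; ring
    rw [e1, e2, ih (a+1)] at key
    have ha : ((a:ℝ)+1) ≠ 0 := by positivity
    have key2 : ∫ x in (0:ℝ)..1, x ^ a * (1 - x) ^ (b+1)
        = (((b:ℝ)+1) / ((a:ℝ)+1)) * ((Nat.factorial (a+1) * Nat.factorial b : ℝ)
            / Nat.factorial (a + 1 + b + 1)) := by
      field_simp at key ⊢
      rw [zero_pow (by omega : b + 1 ≠ 0), zero_pow (by omega : a + 1 ≠ 0)] at key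
      linarith [key]
    rw [key2]
    have hf1 : (Nat.factorial (a+1) : ℝ) = ((a:ℝ)+1) * Nat.factorial a := by
      rw [Nat.factorial_succ]; push_cast; ring
    have hf2 : (Nat.factorial (b+1) : ℝ) = ((b:ℝ)+1) * Nat.factorial b := by
      rw [Nat.factorial_succ]; push_cast; ring
    have hf3 : a + 1 + b + 1 = a + (b+1) + 1 := by ring
    rw [hf1, hf2, hf3]
    have hfa : (Nat.factorial a : ℝ) ≠ 0 := by positivity
    have hfb : (Nat.factorial (a + (b+1) + 1) : ℝ) ≠ 0 := by positivity
    field_simp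

lemma gosper_prod_eq (n : ℕ) :
    (∏ j ∈ Finset.range n,
      (((j : ℝ) + 1) * (2 * ((j : ℝ) + 1) - 1)) /
        (3 * (3 * ((j : ℝ) + 1) + 1) * (3 * ((j : ℝ) + 1) + 2)))
    = 2 * Nat.factorial n * Nat.factorial (2*n) / (2 ^ n * Nat.factorial (3*n+2)) := by
  induction n with
  | zero => norm_num
  | succ n ih =>
    rw [Finset.prod_range_succ, ih]
    have h1 : (Nat.factorial (n+1) : ℝ) = ((n:ℝ)+1) * Nat.factorial n := by
      rw [Nat.factorial_succ]; push_cast; ring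
    have h2 : (Nat.factorial (2*(n+1)) : ℝ)
        = (2*(n:ℝ)+2) * (2*(n:ℝ)+1) * Nat.factorial (2*n) := by
      have : 2*(n+1) = (2*n+1) + 1 := by ring
      rw [this, Nat.factorial_succ, Nat.factorial_succ]; push_cast; ring
    have h3 : (Nat.factorial (3*(n+1)+2) : ℝ)
        = (3*(n:ℝ)+5) * (3*(n:ℝ)+4) * (3*(n:ℝ)+3) * Nat.factorial (3*n+2) := by
      have : 3*(n+1)+2 = ((3*n+2)+1)+1+1 := by ring
      rw [this, Nat.factorial_succ, Nat.factorial_succ, Nat.factorial_succ]; push_cast; ring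
    rw [h1, h2, h3]
    have hfn : (Nat.factorial n : ℝ) ≠ 0 := by positivity
    have hf2n : (Nat.factorial (2*n) : ℝ) ≠ 0 := by positivity
    have hf3n : (Nat.factorial (3*n+2) : ℝ) ≠ 0 := by positivity
    have h2n : (2:ℝ)^n ≠ 0 := by positivity
    have e1 : (3*(n:ℝ)+3) ≠ 0 := by positivity
    have e2 : (3*(n:ℝ)+4) ≠ 0 := by positivity
    have e3 : (3*(n:ℝ)+5) ≠ 0 := by positivity
    have e4 : (3*((n:ℝ)+1)+1) = 3*(n:ℝ)+4 := by ring
    have e5 : (3*((n:ℝ)+1)+2) = 3*(n:ℝ)+5 := by ring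
    rw [e4, e5]
    field_simp
    ring

lemma gosper_integral_eq (n : ℕ) :
    ∫ x in (0:ℝ)..1, (4 - 2*x) * (x*(1-x)^2/2)^n
    = (5*(n:ℝ)+3) * (2 * Nat.factorial n * Nat.factorial (2*n)
        / (2 ^ n * Nat.factorial (3*n+2))) := by
  have hcg : ∀ x : ℝ, (4 - 2*x) * (x*(1-x)^2/2)^n
      = (4/2^n) * (x^n * (1-x)^(2*n+1)) + (2/2^n) * (x^(n+1) * (1-x)^(2*n)) := by
    intro x
    have : (x*(1-x)^2/2)^n = x^n * (1-x)^(2*n) / 2^n := by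
      rw [div_pow, mul_pow, ← pow_mul]
    rw [this, pow_succ (1-x) (2*n), pow_succ x n]
    have h2 : (2:ℝ)^n ≠ 0 := by positivity
    field_simp
    ring
  have hi1 : IntervalIntegrable (fun x : ℝ => (4/2^n) * (x^n * (1-x)^(2*n+1)))
      MeasureTheory.volume 0 1 := by
    apply Continuous.intervalIntegrable; continuity
  have hi2 : IntervalIntegrable (fun x : ℝ => (2/2^n) * (x^(n+1) * (1-x)^(2*n)))
      MeasureTheory.volume 0 1 := by
    apply Continuous.intervalIntegrable; continuity
  rw [show (fun x : ℝ => (4 - 2*x) * (x*(1-x)^2/2)^n)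
      = fun x : ℝ => (4/2^n) * (x^n * (1-x)^(2*n+1)) + (2/2^n) * (x^(n+1) * (1-x)^(2*n))
    from funext hcg]
  rw [intervalIntegral.integral_add hi1 hi2, intervalIntegral.integral_const_mul,
    intervalIntegral.integral_const_mul]
  have b1 := beta_nat (2*n+1) n
  have b2 := beta_nat (2*n) (n+1)
  have i1 : n + (2*n+1) + 1 = 3*n+2 := by ring
  have i2 : (n+1) + 2*n + 1 = 3*n+2 := by ring
  rw [i1] at b1
  rw [i2] at b2
  rw [b1, b2]
  have h1 : (Nat.factorial (n+1) : ℝ) = ((n:ℝ)+1) * Nat.factorial n := by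
    rw [Nat.factorial_succ]; push_cast; ring
  have h2 : (Nat.factorial (2*n+1) : ℝ) = (2*(n:ℝ)+1) * Nat.factorial (2*n) := by
    rw [Nat.factorial_succ]; push_cast; ring
  rw [h1, h2]
  have hfn : (Nat.factorial n : ℝ) ≠ 0 := by positivity
  have hf2n : (Nat.factorial (2*n) : ℝ) ≠ 0 := by positivity
  have hf3n : (Nat.factorial (3*n+2) : ℝ) ≠ 0 := by positivity
  have h2n : (2:ℝ)^n ≠ 0 := by positivity
  field_simp
  ring

theorem gosper_pi_series :
    Real.pi = ∑' i : ℕ, (5 * ((i : ℝ) + 1) - 2) *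
      ∏ j ∈ Finset.range i,
        (((j : ℝ) + 1) * (2 * ((j : ℝ) + 1) - 1)) /
          (3 * (3 * ((j : ℝ) + 1) + 1) * (3 * ((j : ℝ) + 1) + 2)) := by
  set f : ℕ → ℝ → ℝ := fun n x => (4 - 2*x) * (x*(1-x)^2/2)^n with hf
  have hcont : ∀ n, Continuous (f n) := by
    intro n; simp only [hf]; continuity
  have hInt : ∀ n, IntegrableOn (f n) (Set.Ioc (0:ℝ) 1) MeasureTheory.volume := by
    intro n
    exact (hcont n).integrableOn_Ioc
  -- pointwise facts on Ioc 0 1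
  have hu0 : ∀ x ∈ Set.Ioc (0:ℝ) 1, 0 ≤ x*(1-x)^2/2 := by
    intro x hx
    have := sq_nonneg (1-x)
    have := hx.1.le
    positivity
  have hub : ∀ x ∈ Set.Ioc (0:ℝ) 1, x*(1-x)^2/2 ≤ 2/27 := by
    intro x hx
    nlinarith [mul_nonneg (sq_nonneg (3*x-1)) (by linarith [hx.2] : (0:ℝ) ≤ 4 - 3*x)]
  -- norm bound
  have hnormle : ∀ n, (∫ x in Set.Ioc (0:ℝ) 1, ‖f n x‖) ≤ 4 * (2/27)^n := by
    intro n
    have hle : ∀ x ∈ Set.Ioc (0:ℝ) 1, ‖f n x‖ ≤ 4 * (2/27)^n := by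
      intro x hx
      have h0 := hu0 x hx
      have hb := hub x hx
      have hfx : 0 ≤ f n x := by
        apply mul_nonneg
        · linarith [hx.2]
        · exact pow_nonneg h0 n
      rw [Real.norm_of_nonneg hfx]
      apply mul_le_mul
      · linarith [hx.1.le]
      · exact pow_le_pow_left₀ h0 hb n
      · exact pow_nonneg h0 n
      · norm_num
    calc (∫ x in Set.Ioc (0:ℝ) 1, ‖f n x‖)
        ≤ ∫ _x in Set.Ioc (0:ℝ) 1, 4 * (2/27)^n := by
          apply setIntegral_mono_on ((hInt n).norm) (integrableOn_const (by simp))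
            measurableSet_Ioc hle
      _ = 4 * (2/27)^n := by simp
  have hsum : Summable (fun n => ∫ x in Set.Ioc (0:ℝ) 1, ‖f n x‖) := by
    apply Summable.of_nonneg_of_le
      (fun n => integral_nonneg (fun x => norm_nonneg _)) hnormle
    exact (summable_geometric_of_lt_one (by norm_num) (by norm_num)).mul_left 4
  have key := MeasureTheory.integral_tsum_of_summable_integral_norm
    (fun n => hInt n) hsum
  -- compute the pointwise tsum
  have hts : ∀ x ∈ Set.Ioc (0:ℝ) 1, (∑' n, f n x) = 4 / (1 + x^2) := by
    intro x hx
    have h0 := hu0 x hx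
    have hb := hub x hx
    have h1 : x*(1-x)^2/2 < 1 := by linarith
    simp only [hf]
    rw [tsum_mul_left, tsum_geometric_of_lt_one h0 h1]
    have hd : 1 - x*(1-x)^2/2 = (2-x)*(1+x^2)/2 := by ring
    rw [hd]
    have hx2 : (2:ℝ) - x ≠ 0 := by nlinarith [hx.2]
    have hx3 : (1:ℝ) + x^2 ≠ 0 := by positivity
    field_simp
    ring
  have hR : (∫ x in Set.Ioc (0:ℝ) 1, ∑' n, f n x) = Real.pi := by
    rw [MeasureTheory.setIntegral_congr_fun measurableSet_Ioc hts]
    rw [← intervalIntegral.integral_of_le (zero_le_one (α := ℝ))]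
    have : (fun x : ℝ => 4 / (1 + x^2)) = fun x : ℝ => 4 * (1 / (1 + x^2)) := by
      funext x; ring
    rw [this, intervalIntegral.integral_const_mul, integral_one_div_one_add_sq,
      Real.arctan_one, Real.arctan_zero]
    ring
  have hL : ∀ n : ℕ, (∫ x in Set.Ioc (0:ℝ) 1, f n x)
      = (5 * ((n : ℝ) + 1) - 2) *
        ∏ j ∈ Finset.range n,
          (((j : ℝ) + 1) * (2 * ((j : ℝ) + 1) - 1)) /
            (3 * (3 * ((j : ℝ) + 1) + 1) * (3 * ((j : ℝ) + 1) + 2)) := by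
    intro n
    rw [← intervalIntegral.integral_of_le (zero_le_one (α := ℝ))]
    rw [gosper_integral_eq n, gosper_prod_eq n]
    ring
  rw [← hR, ← key]
  exact tsum_congr hL
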